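/- arXiv:1608.05249 — 4 statements merged into one kernel-verified Lean document; each statement's English description precedes it below -/
import Mathlib

section
/- Let X_+, X_- : (r_e, ∞) → ℂ satisfy X_+' = iα X_+ + (iβ + γ) X_- and X_-' = -iα X_- - (iβ - γ) X_+ with α, β, γ real continuous. Then the derivative of the function F(r) = i(conj(X_+) X_- - conj(X_-) X_+) equals 2α(conj(X_+)X_- + conj(X_-)X_+) + 2β(|X_+|² + |X_-|²); in particular F is real-valued and F'(r) ≥ 2(β(r) - |α(r)|)(|X_+(r)|² + |X_-(r)|²). -/
open Complex Set

theorem stmt1 (re : ℝ) (Xp Xm : ℝ → ℂ) (α β γ : ℝ → ℝ)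
    (hα : ContinuousOn α (Ioi re)) (hβ : ContinuousOn β (Ioi re))
    (hγ : ContinuousOn γ (Ioi re))
    (hXp : ∀ r ∈ Ioi re, HasDerivAt Xp
      (Complex.I * (α r) * Xp r + (Complex.I * (β r) + (γ r)) * Xm r) r)
    (hXm : ∀ r ∈ Ioi re, HasDerivAt Xm
      (-(Complex.I * (α r)) * Xm r - (Complex.I * (β r) - (γ r)) * Xp r) r) :
    ∀ r ∈ Ioi re,
      (Complex.I * ((starRingEnd ℂ) (Xp r) * Xm r - (starRingEnd ℂ) (Xm r) * Xp r)).im = 0 ∧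
      HasDerivAt (fun s => (Complex.I * ((starRingEnd ℂ) (Xp s) * Xm s -
          (starRingEnd ℂ) (Xm s) * Xp s)).re)
        ((2 * (α r) * ((starRingEnd ℂ) (Xp r) * Xm r + (starRingEnd ℂ) (Xm r) * Xp r)
          + 2 * (β r) * ((‖Xp r‖ : ℂ) ^ 2 + (‖Xm r‖ : ℂ) ^ 2)).re) r ∧
      (2 * (α r) * ((starRingEnd ℂ) (Xp r) * Xm r + (starRingEnd ℂ) (Xm r) * Xp r)
          + 2 * (β r) * ((‖Xp r‖ : ℂ) ^ 2 + (‖Xm r‖ : ℂ) ^ 2)).re ≥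
        2 * (β r - |α r|) * (‖Xp r‖ ^ 2 + ‖Xm r‖ ^ 2) := by
  intro r hr
  have hp := hXp r hr
  have hm := hXm r hr
  set a := Xp r
  set b := Xm r
  set Dp := Complex.I * (α r) * a + (Complex.I * (β r) + (γ r)) * b with hDp
  set Dm := -(Complex.I * (α r)) * b - (Complex.I * (β r) - (γ r)) * a with hDm
  refine ⟨?_, ?_, ?_⟩
  · simp [Complex.mul_im, Complex.sub_re, Complex.sub_im, Complex.mul_re,
      Complex.conj_re, Complex.conj_im]
    ring
  · -- derivative of the complex function
    have hG : HasDerivAt (fun s => Complex.I * ((starRingEnd ℂ) (Xp s) * Xm s -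
        (starRingEnd ℂ) (Xm s) * Xp s))
        (Complex.I * (((starRingEnd ℂ) Dp * b + (starRingEnd ℂ) a * Dm) -
          ((starRingEnd ℂ) Dm * a + (starRingEnd ℂ) b * Dp))) r := by
      have h1 : HasDerivAt (fun s => (starRingEnd ℂ) (Xp s)) ((starRingEnd ℂ) Dp) r := hp.star
      have h2 : HasDerivAt (fun s => (starRingEnd ℂ) (Xm s)) ((starRingEnd ℂ) Dm) r := hm.star
      exact ((h1.mul hm).sub (h2.mul hp)).const_mul Complex.I
    have key : (Complex.I * (((starRingEnd ℂ) Dp * b + (starRingEnd ℂ) a * Dm) -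
          ((starRingEnd ℂ) Dm * a + (starRingEnd ℂ) b * Dp))) =
        (2 * (α r) * ((starRingEnd ℂ) a * b + (starRingEnd ℂ) b * a)
          + 2 * (β r) * ((‖a‖ : ℂ) ^ 2 + (‖b‖ : ℂ) ^ 2)) := by
      have ha : ((‖a‖ : ℂ)) ^ 2 = (starRingEnd ℂ) a * a := by
        rw [← Complex.normSq_eq_conj_mul_self]
        norm_cast
        rw [Complex.normSq_eq_norm_sq]
      have hb : ((‖b‖ : ℂ)) ^ 2 = (starRingEnd ℂ) b * b := by
        rw [← Complex.normSq_eq_conj_mul_self]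
        norm_cast
        rw [Complex.normSq_eq_norm_sq]
      rw [ha, hb, hDp, hDm]
      simp only [map_add, map_mul, map_sub, map_neg, Complex.conj_I, Complex.conj_ofReal]
      linear_combination (-(2 * ((α r : ℂ)) * ((starRingEnd ℂ) a * b + (starRingEnd ℂ) b * a)
        + 2 * ((β r : ℂ)) * ((starRingEnd ℂ) a * a + (starRingEnd ℂ) b * b))) * Complex.I_sq
    rw [key] at hG
    exact (Complex.reCLM.hasFDerivAt.comp_hasDerivAt r hG)
  · -- the inequality
    have hre : (2 * (α r) * ((starRingEnd ℂ) a * b + (starRingEnd ℂ) b * a)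
          + 2 * (β r) * ((‖a‖ : ℂ) ^ 2 + (‖b‖ : ℂ) ^ 2)).re =
        2 * (α r) * (2 * ((starRingEnd ℂ) a * b).re) + 2 * (β r) * (‖a‖ ^ 2 + ‖b‖ ^ 2) := by
      simp only [Complex.add_re, Complex.add_im, Complex.mul_re, Complex.mul_im,
        Complex.conj_re, Complex.conj_im, ← Complex.ofReal_pow, Complex.ofReal_re,
        Complex.ofReal_im, Complex.re_ofNat, Complex.im_ofNat]
      ring
    rw [hre]
    have habs : |((starRingEnd ℂ) a * b).re| ≤ ‖a‖ * ‖b‖ := by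
      calc |((starRingEnd ℂ) a * b).re| ≤ ‖(starRingEnd ℂ) a * b‖ :=
            Complex.abs_re_le_norm _
        _ = ‖a‖ * ‖b‖ := by rw [norm_mul, Complex.norm_conj]
    have h1 : -(‖a‖ * ‖b‖) ≤ ((starRingEnd ℂ) a * b).re := (abs_le.mp habs).1
    have h2 : ((starRingEnd ℂ) a * b).re ≤ ‖a‖ * ‖b‖ := (abs_le.mp habs).2
    have hαle : α r ≤ |α r| := le_abs_self _
    have hαge : -|α r| ≤ α r := neg_abs_le _
    nlinarith [sq_nonneg (‖a‖ - ‖b‖), sq_nonneg (‖a‖ + ‖b‖), abs_nonneg (α r),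
      norm_nonneg a, norm_nonneg b]
end

section
/- Let Φ : (r_e, r_1] → ℂⁿ be a differentiable function satisfying |d/dr |Φ(r)|²| ≤ 2 C₁ (r - r_e)^β |Φ(r)|² for all r ∈ (r_e, r_1], where C₁ > 0 and β > -1. Then |Φ| extends continuously to r = r_e (i.e., lim_{r → r_e⁺} |Φ(r)| exists and is finite), and if this limit is 0, then Φ ≡ 0 on (r_e, r_1]. -/
open Set Filter Topology

theorem stmt2 (n : ℕ) (re r1 : ℝ) (hlt : re < r1)
    (Φ : ℝ → EuclideanSpace ℂ (Fin n)) (C₁ β : ℝ) (hC₁ : 0 < C₁) (hβ : -1 < β)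
    (D : ℝ → ℝ)
    (hD : ∀ r ∈ Ioc re r1, HasDerivAt (fun s => ‖Φ s‖ ^ 2) (D r) r)
    (hbound : ∀ r ∈ Ioc re r1, |D r| ≤ 2 * C₁ * (r - re) ^ β * ‖Φ r‖ ^ 2) :
    ∃ L : ℝ, Tendsto (fun r => ‖Φ r‖) (nhdsWithin re (Ioi re)) (nhds L) ∧
      (L = 0 → ∀ r ∈ Ioc re r1, Φ r = 0) := by
  have hβ1 : (0:ℝ) < β + 1 := by linarith
  set f : ℝ → ℝ := fun r => ‖Φ r‖ ^ 2 with hfdef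
  set G : ℝ → ℝ := fun r => (2 * C₁ / (β + 1)) * (r - re) ^ (β + 1) with hGdef
  -- derivative of G on Ioc
  have hGd : ∀ r ∈ Ioc re r1, HasDerivAt G (2 * C₁ * (r - re) ^ β) r := by
    intro r hr
    have hrre : 0 < r - re := sub_pos.2 hr.1
    have h1 : HasDerivAt (fun s : ℝ => s - re) 1 r := (hasDerivAt_id r).sub_const re
    have h2 : HasDerivAt (fun x : ℝ => x ^ (β + 1))
        ((β + 1) * (r - re) ^ (β + 1 - 1)) (r - re) :=
      Real.hasDerivAt_rpow_const (Or.inl hrre.ne')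
    have h3 := (h2.comp r h1).const_mul (2 * C₁ / (β + 1))
    have heq : 2 * C₁ / (β + 1) * ((β + 1) * (r - re) ^ (β + 1 - 1) * 1) =
        2 * C₁ * (r - re) ^ β := by
      rw [add_sub_cancel_right]
      field_simp
    rw [heq] at h3
    exact h3
  -- F₊ = f * exp G is monotone on Ioc, F₋ = f * exp (-G) is antitone
  set Fp : ℝ → ℝ := fun r => f r * Real.exp (G r) with hFp
  set Fm : ℝ → ℝ := fun r => f r * Real.exp (-G r) with hFm
  have hgnonneg : ∀ r ∈ Ioc re r1, 0 ≤ 2 * C₁ * (r - re) ^ β := by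
    intro r hr
    have h : 0 < r - re := sub_pos.2 hr.1
    positivity
  have hFpd : ∀ r ∈ Ioc re r1,
      HasDerivAt Fp ((D r + 2 * C₁ * (r - re) ^ β * f r) * Real.exp (G r)) r := by
    intro r hr
    have := (hD r hr).fun_mul ((hGd r hr).exp)
    refine this.congr_deriv ?_
    ring
  have hFmd : ∀ r ∈ Ioc re r1,
      HasDerivAt Fm ((D r - 2 * C₁ * (r - re) ^ β * f r) * Real.exp (-G r)) r := by
    intro r hr
    have := (hD r hr).fun_mul (((hGd r hr).neg).exp)
    refine this.congr_deriv ?_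
    simp only [Pi.neg_apply]
    ring
  have hfnonneg : ∀ r, 0 ≤ f r := fun r => by positivity
  have hDlo : ∀ r ∈ Ioc re r1, 0 ≤ D r + 2 * C₁ * (r - re) ^ β * f r := by
    intro r hr
    have := hbound r hr
    have h := neg_abs_le (D r)
    simp only [hfdef]
    nlinarith [abs_nonneg (D r)]
  have hDhi : ∀ r ∈ Ioc re r1, D r - 2 * C₁ * (r - re) ^ β * f r ≤ 0 := by
    intro r hr
    have := hbound r hr
    have h := le_abs_self (D r)
    simp only [hfdef]
    nlinarith
  have hcont : ContinuousOn Fp (Ioc re r1) := fun r hr =>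
    ((hFpd r hr).continuousAt).continuousWithinAt
  have hcontm : ContinuousOn Fm (Ioc re r1) := fun r hr =>
    ((hFmd r hr).continuousAt).continuousWithinAt
  have hint : interior (Ioc re r1) = Ioo re r1 := interior_Ioc
  have hmono : MonotoneOn Fp (Ioc re r1) := by
    apply monotoneOn_of_hasDerivWithinAt_nonneg (convex_Ioc re r1) hcont
      (f' := fun r => (D r + 2 * C₁ * (r - re) ^ β * f r) * Real.exp (G r))
    · intro x hx
      rw [hint] at hx
      exact ((hFpd x (Ioo_subset_Ioc_self hx)).hasDerivWithinAt)
    · intro x hx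
      rw [hint] at hx
      exact mul_nonneg (hDlo x (Ioo_subset_Ioc_self hx)) (Real.exp_pos _).le
  have hanti : AntitoneOn Fm (Ioc re r1) := by
    apply antitoneOn_of_hasDerivWithinAt_nonpos (convex_Ioc re r1) hcontm
      (f' := fun r => (D r - 2 * C₁ * (r - re) ^ β * f r) * Real.exp (-G r))
    · intro x hx
      rw [hint] at hx
      exact ((hFmd x (Ioo_subset_Ioc_self hx)).hasDerivWithinAt)
    · intro x hx
      rw [hint] at hx
      exact mul_nonpos_of_nonpos_of_nonneg (hDhi x (Ioo_subset_Ioc_self hx))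
        (Real.exp_pos _).le
  -- limit of Fp at re from the right
  have hne : (Ioo re r1).Nonempty := nonempty_Ioo.2 hlt
  have hbdd : BddBelow (Fp '' Ioo re r1) := by
    refine ⟨0, ?_⟩
    rintro y ⟨x, -, rfl⟩
    exact mul_nonneg (hfnonneg x) (Real.exp_pos _).le
  set M : ℝ := sInf (Fp '' Ioo re r1) with hM
  have hFpTendsto : Tendsto Fp (𝓝[>] re) (𝓝 M) :=
    (hmono.mono Ioo_subset_Ioc_self).tendsto_nhdsWithin_Ioo_right hne hbdd
  have hMnonneg : 0 ≤ M := by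
    refine le_csInf (hne.image _) ?_
    rintro y ⟨x, -, rfl⟩
    exact mul_nonneg (hfnonneg x) (Real.exp_pos _).le
  -- G tends to 0 at re from the right
  have hGtendsto : Tendsto G (𝓝[>] re) (𝓝 0) := by
    have h1 : Tendsto (fun r : ℝ => r - re) (𝓝[>] re) (𝓝 0) := by
      have h := ((continuous_sub_right re).tendsto re).mono_left
        (nhdsWithin_le_nhds (s := Ioi re))
      simpa using h
    have h2 : Tendsto (fun x : ℝ => x ^ (β + 1)) (𝓝 0) (𝓝 ((0:ℝ) ^ (β + 1))) :=
      (Real.continuousAt_rpow_const 0 (β + 1) (Or.inr hβ1.le)).tendsto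
    rw [Real.zero_rpow hβ1.ne'] at h2
    have := (h2.comp h1).const_mul (2 * C₁ / (β + 1))
    simpa [hGdef, Function.comp] using this
  have hexpG : Tendsto (fun r => Real.exp (-G r)) (𝓝[>] re) (𝓝 1) := by
    have h := hGtendsto.neg
    rw [neg_zero] at h
    have := (Real.continuous_exp.tendsto 0).comp h
    simpa [Function.comp_def] using this
  -- f tends to M
  have hftendsto : Tendsto f (𝓝[>] re) (𝓝 M) := by
    have : Tendsto (fun r => Fp r * Real.exp (-G r)) (𝓝[>] re) (𝓝 (M * 1)) :=
      hFpTendsto.mul hexpG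
    rw [mul_one] at this
    refine this.congr fun r => ?_
    simp only [hFp, mul_assoc, ← Real.exp_add, add_neg_cancel, Real.exp_zero, mul_one]
  refine ⟨Real.sqrt M, ?_, ?_⟩
  · have := (Real.continuous_sqrt.tendsto M).comp hftendsto
    refine this.congr fun r => ?_
    simp only [Function.comp, hfdef]
    exact Real.sqrt_sq (norm_nonneg _)
  · intro hL r hr
    have hM0 : M = 0 := by
      have := Real.sqrt_eq_zero hMnonneg |>.mp hL
      exact this
    -- Fm tends to 0 at re⁺
    have hFmTendsto : Tendsto Fm (𝓝[>] re) (𝓝 0) := by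
      have : Tendsto (fun s => f s * Real.exp (-G s)) (𝓝[>] re) (𝓝 (M * 1)) :=
        hftendsto.mul hexpG
      rw [hM0, zero_mul] at this
      exact this
    -- Fm r ≤ lim Fm = 0 by antitonicity
    have hle : Fm r ≤ 0 := by
      have hev : ∀ᶠ s in 𝓝[>] re, Fm r ≤ Fm s := by
        filter_upwards [Ioo_mem_nhdsGT_of_mem ⟨le_refl re, hr.1⟩] with s hs
        exact hanti ⟨hs.1, hs.2.le.trans hr.2⟩ hr hs.2.le
      exact ge_of_tendsto hFmTendsto hev
    have hf0 : f r = 0 := by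
      have hpos := Real.exp_pos (-G r)
      have hnn := hfnonneg r
      have hle' : f r * Real.exp (-G r) ≤ 0 := hle
      nlinarith
    have : ‖Φ r‖ = 0 := by
      have := hf0
      simp only [hfdef] at this
      nlinarith [norm_nonneg (Φ r)]
    simpa using this
end

section
/- Let X_+, X_- : [r_1, ∞) → ℂ satisfy the radial system X_+' = iα X_+ + (iβ + γ) X_-, X_-' = -iα X_- - (iβ - γ) X_+ with α, β, γ : [r_1, ∞) → ℝ continuous, and suppose β(r) - |α(r)| ≥ q/r for all r ≥ r_2 ≥ r_1 (some q > 0), and |X_+|² - |X_-|² = C with C ≠ 0. Then lim_{r→∞} (|X_+(r)|² + |X_-(r)|²) = ∞; in fact |X_+(r)|² + |X_-(r)|² ≥ C₁ r^{2q} for some C₁ > 0 and all sufficiently large r. -/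
open Complex Set Filter Topology

lemma aux_alg_deriv (a b : ℂ) (A B G : ℝ) :
    -2 * (((starRingEnd ℂ) (Complex.I*A*a + (Complex.I*B+G)*b) * b
      + (starRingEnd ℂ) a * (-(Complex.I*A)*b - (Complex.I*B-G)*a)).im)
    = 4*A*((starRingEnd ℂ) a * b).re + 2*B*(‖a‖^2+‖b‖^2) := by
  simp [Complex.sq_norm, Complex.normSq_apply, Complex.mul_im,
    Complex.mul_re, Complex.add_im, Complex.add_re, Complex.sub_im, Complex.sub_re]
  ring

lemma aux_alg_ineq (a b : ℂ) (A B : ℝ) :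
    4*A*((starRingEnd ℂ) a * b).re + 2*B*(‖a‖^2+‖b‖^2) ≥ 2*(B - |A|)*(‖a‖^2+‖b‖^2) := by
  have h1 : ((starRingEnd ℂ) a * b).re = a.re*b.re + a.im*b.im := by
    simp [Complex.mul_re]
  have h2 : ‖a‖^2 = a.re^2 + a.im^2 := by
    rw [Complex.sq_norm, Complex.normSq_apply]; ring
  have h3 : ‖b‖^2 = b.re^2 + b.im^2 := by
    rw [Complex.sq_norm, Complex.normSq_apply]; ring
  rcases abs_cases A with ⟨hA, _⟩ | ⟨hA, _⟩ <;> rw [h1, h2, h3, hA] <;>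
    nlinarith [sq_nonneg (a.re - b.re), sq_nonneg (a.im - b.im), sq_nonneg (a.re + b.re),
      sq_nonneg (a.im + b.im)]

lemma aux_alg_FleN (a b : ℂ) : -2*((starRingEnd ℂ) a * b).im ≤ ‖a‖^2+‖b‖^2 := by
  have h1 : ((starRingEnd ℂ) a * b).im = a.re*b.im - a.im*b.re := by
    simp [Complex.mul_im]; ring
  have h2 : ‖a‖^2 = a.re^2 + a.im^2 := by
    rw [Complex.sq_norm, Complex.normSq_apply]; ring
  have h3 : ‖b‖^2 = b.re^2 + b.im^2 := by
    rw [Complex.sq_norm, Complex.normSq_apply]; ring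
  rw [h1, h2, h3]; nlinarith [sq_nonneg (a.re + b.im), sq_nonneg (a.im - b.re)]

lemma aux_growth (r2 q c : ℝ) (hr2 : 0 < r2) (hq : 0 < q) (hc : 0 < c)
    (F F' N : ℝ → ℝ)
    (hF : ∀ r ∈ Ici r2, HasDerivAt F (F' r) r)
    (hF' : ∀ r ∈ Ici r2, 2*q/r * N r ≤ F' r)
    (hFN : ∀ r ∈ Ici r2, F r ≤ N r)
    (hcN : ∀ r ∈ Ici r2, c ≤ N r) :
    ∃ C₁ > (0:ℝ), ∃ r4, r2 ≤ r4 ∧ ∀ r ∈ Ici r4, C₁ * r ^ (2*q) ≤ N r := by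
  have hpos : ∀ r ∈ Ici r2, (0:ℝ) < r := fun r hr => lt_of_lt_of_le hr2 hr
  -- Step 1: F r3 ≥ 1 for suitable r3
  have hGmono : MonotoneOn (fun s => F s - 2*q*c * Real.log s) (Ici r2) := by
    apply monotoneOn_of_hasDerivWithinAt_nonneg (convex_Ici r2)
      (f' := fun x => F' x - 2*q*c * x⁻¹)
    · intro x hx
      exact ((hF x hx).sub ((Real.hasDerivAt_log
        (ne_of_gt (hpos x hx))).const_mul (2*q*c))).continuousAt.continuousWithinAt
    · intro x hx
      rw [interior_Ici] at hx
      exact ((hF x (Set.mem_Ici.mpr (le_of_lt hx))).sub ((Real.hasDerivAt_log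
        (ne_of_gt (hpos x (Set.mem_Ici.mpr (le_of_lt hx))))).const_mul (2*q*c))).hasDerivWithinAt
    · intro x hx
      rw [interior_Ici] at hx
      have hx' : x ∈ Ici r2 := Set.mem_Ici.mpr (le_of_lt hx)
      have hxp := hpos x hx'
      have h1 : 2*q/x * c ≤ 2*q/x * N x :=
        mul_le_mul_of_nonneg_left (hcN x hx') (by positivity)
      have h2 : 2*q*c*x⁻¹ = 2*q/x * c := by field_simp
      have := hF' x hx'
      linarith
  set r3 : ℝ := r2 * Real.exp ((|F r2| + 1) / (2*q*c)) with hr3def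
  have hr23 : r2 ≤ r3 := by
    nth_rewrite 1 [← mul_one r2]
    exact mul_le_mul_of_nonneg_left (Real.one_le_exp (by positivity)) hr2.le
  have hFr3 : 1 ≤ F r3 := by
    have hmono := hGmono (self_mem_Ici) hr23 hr23
    have hlog : Real.log r3 = Real.log r2 + (|F r2| + 1) / (2*q*c) := by
      rw [hr3def, Real.log_mul (ne_of_gt hr2) (Real.exp_ne_zero _), Real.log_exp]
    have hcancel : 2*q*c * ((|F r2| + 1) / (2*q*c)) = |F r2| + 1 := by
      field_simp
    have habs : F r2 + |F r2| ≥ 0 := by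
      rcases abs_cases (F r2) with ⟨h, _⟩ | ⟨h, _⟩ <;> linarith
    simp only [hlog] at hmono
    nlinarith
  -- Step 2: F r * r^(-(2q)) monotone
  have hHmono : MonotoneOn (fun s => F s * s ^ (-(2*q))) (Ici r2) := by
    apply monotoneOn_of_hasDerivWithinAt_nonneg (convex_Ici r2)
      (f' := fun x => F' x * x ^ (-(2*q)) + F x * (-(2*q) * x ^ (-(2*q)-1)))
    · intro x hx
      exact ((hF x hx).mul (Real.hasDerivAt_rpow_const
        (Or.inl (ne_of_gt (hpos x hx))))).continuousAt.continuousWithinAt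
    · intro x hx
      rw [interior_Ici] at hx
      exact ((hF x (Set.mem_Ici.mpr (le_of_lt hx))).mul (Real.hasDerivAt_rpow_const
        (Or.inl (ne_of_gt (hpos x (Set.mem_Ici.mpr (le_of_lt hx))))))).hasDerivWithinAt
    · intro x hx
      rw [interior_Ici] at hx
      have hx' : x ∈ Ici r2 := Set.mem_Ici.mpr (le_of_lt hx)
      have hxp := hpos x hx'
      have hP : (0:ℝ) < x ^ (-(2*q)) := Real.rpow_pos_of_pos hxp _
      have e : x ^ (-(2*q)-1) = x ^ (-(2*q)) * x⁻¹ := by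
        rw [Real.rpow_sub_one (ne_of_gt hxp), div_eq_mul_inv]
      have h1 : 2*q/x * F x ≤ F' x := le_trans
        (mul_le_mul_of_nonneg_left (hFN x hx') (by positivity)) (hF' x hx')
      have h2 : (2*q/x * F x) * x ^ (-(2*q)) ≤ F' x * x ^ (-(2*q)) :=
        mul_le_mul_of_nonneg_right h1 hP.le
      have h3 : F x * (-(2*q) * (x ^ (-(2*q)) * x⁻¹)) = -((2*q/x * F x) * x ^ (-(2*q))) := by
        rw [div_eq_mul_inv]; ring
      rw [e, h3]
      linarith
  -- Conclusion
  refine ⟨F r3 * r3 ^ (-(2*q)), by positivity, r3, hr23, fun r hr => ?_⟩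
  have hr2r : r ∈ Ici r2 := le_trans hr23 hr
  have hrp := hpos r hr2r
  have hH : F r3 * r3 ^ (-(2*q)) ≤ F r * r ^ (-(2*q)) :=
    hHmono (show r3 ∈ Ici r2 from hr23) hr2r hr
  have hy : (0:ℝ) < r ^ (2*q) := Real.rpow_pos_of_pos hrp _
  have hneg : r ^ (-(2*q)) = (r ^ (2*q))⁻¹ := Real.rpow_neg hrp.le _
  have : F r3 * r3 ^ (-(2*q)) * r ^ (2*q) ≤ F r := by
    rw [hneg] at hH
    calc F r3 * r3 ^ (-(2*q)) * r ^ (2*q) ≤ F r * (r ^ (2*q))⁻¹ * r ^ (2*q) :=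
          mul_le_mul_of_nonneg_right hH hy.le
      _ = F r := by field_simp
  exact le_trans this (hFN r hr2r)

theorem stmt10 (r1 r2 q C : ℝ) (hr1 : 0 < r1) (hr12 : r1 ≤ r2) (hq : 0 < q)
    (hC : C ≠ 0)
    (Xp Xm : ℝ → ℂ) (α β γ : ℝ → ℝ)
    (hα : ContinuousOn α (Ici r1)) (hβ : ContinuousOn β (Ici r1))
    (hγ : ContinuousOn γ (Ici r1))
    (hXp : ∀ r ∈ Ici r1, HasDerivAt Xp
      (Complex.I * (α r) * Xp r + (Complex.I * (β r) + (γ r)) * Xm r) r)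
    (hXm : ∀ r ∈ Ici r1, HasDerivAt Xm
      (-(Complex.I * (α r)) * Xm r - (Complex.I * (β r) - (γ r)) * Xp r) r)
    (hβα : ∀ r ∈ Ici r2, β r - |α r| ≥ q / r)
    (hcons : ∀ r ∈ Ici r1, ‖Xp r‖ ^ 2 - ‖Xm r‖ ^ 2 = C) :
    Tendsto (fun r => ‖Xp r‖ ^ 2 + ‖Xm r‖ ^ 2) atTop atTop ∧
    ∃ C₁ > (0 : ℝ), ∃ r4 : ℝ, ∀ r ∈ Ici r4,
      ‖Xp r‖ ^ 2 + ‖Xm r‖ ^ 2 ≥ C₁ * r ^ (2 * q) := by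
  have hr2 : 0 < r2 := lt_of_lt_of_le hr1 hr12
  have hsub : Ici r2 ⊆ Ici r1 := Ici_subset_Ici.mpr hr12
  have hcabs : (0:ℝ) < |C| := abs_pos.mpr hC
  -- derivative of F
  have hF : ∀ r ∈ Ici r2, HasDerivAt (fun s => -2 * ((starRingEnd ℂ) (Xp s) * Xm s).im)
      (4*(α r)*((starRingEnd ℂ) (Xp r) * Xm r).re + 2*(β r)*(‖Xp r‖^2+‖Xm r‖^2)) r := by
    intro r hr
    have hr' := hsub hr
    have hc : HasDerivAt (fun s => (starRingEnd ℂ) (Xp s))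
        ((starRingEnd ℂ) (Complex.I * (α r) * Xp r + (Complex.I * (β r) + (γ r)) * Xm r)) r :=
      Complex.conjCLE.toContinuousLinearMap.hasFDerivAt.comp_hasDerivAt r (hXp r hr')
    have him := (Complex.imCLM.hasFDerivAt.comp_hasDerivAt r
      (hc.mul (hXm r hr'))).const_mul (-2)
    rw [← aux_alg_deriv (Xp r) (Xm r) (α r) (β r) (γ r)]
    exact him
  -- lower bound on the derivative
  have hF' : ∀ r ∈ Ici r2, 2*q/r * (‖Xp r‖^2+‖Xm r‖^2) ≤
      4*(α r)*((starRingEnd ℂ) (Xp r) * Xm r).re + 2*(β r)*(‖Xp r‖^2+‖Xm r‖^2) := by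
    intro r hr
    have hrp : (0:ℝ) < r := lt_of_lt_of_le hr2 hr
    have hNpos : (0:ℝ) ≤ ‖Xp r‖^2+‖Xm r‖^2 := by positivity
    have h1 := aux_alg_ineq (Xp r) (Xm r) (α r) (β r)
    have h2 : 2*(q/r)*(‖Xp r‖^2+‖Xm r‖^2) ≤ 2*(β r - |α r|)*(‖Xp r‖^2+‖Xm r‖^2) := by
      apply mul_le_mul_of_nonneg_right _ hNpos
      have := hβα r hr
      linarith
    have h3 : 2*q/r = 2*(q/r) := by ring
    rw [h3]
    linarith [h2, h1]
  -- F ≤ N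
  have hFN : ∀ r ∈ Ici r2, -2 * ((starRingEnd ℂ) (Xp r) * Xm r).im ≤ ‖Xp r‖^2+‖Xm r‖^2 :=
    fun r _ => aux_alg_FleN (Xp r) (Xm r)
  -- |C| ≤ N
  have hcN : ∀ r ∈ Ici r2, |C| ≤ ‖Xp r‖^2+‖Xm r‖^2 := by
    intro r hr
    have h := hcons r (hsub hr)
    have h1 : (0:ℝ) ≤ ‖Xp r‖^2 := by positivity
    have h2 : (0:ℝ) ≤ ‖Xm r‖^2 := by positivity
    rcases abs_cases C with ⟨hc, _⟩ | ⟨hc, _⟩ <;> rw [hc] <;> linarith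
  obtain ⟨C₁, hC₁, r4, hr4, hbound⟩ := aux_growth r2 q |C| hr2 hq hcabs _ _ _ hF hF' hFN hcN
  have h2q : (0:ℝ) < 2*q := by linarith
  constructor
  · refine tendsto_atTop_mono' atTop ?_ ((tendsto_rpow_atTop h2q).const_mul_atTop hC₁)
    filter_upwards [eventually_ge_atTop r4] with r hr using hbound r hr
  · exact ⟨C₁, hC₁, r4, fun r hr => hbound r hr⟩
end

section
/- Let X_+, X_- : (r_e, ∞) → ℂ satisfy the radial Dirac system X_+' = iα X_+ + (iβ + γ)X_-, X_-' = -iα X_- - (iβ - γ)X_+ with α, β, γ real continuous on (r_e, ∞), and suppose: (i) |X_+(r)|² = |X_-(r)|² for all r > r_e, (ii) both X_± extend continuously to r_e, and (iii) X_+(r_e) = 0 or X_-(r_e) = 0. Then X_+ ≡ 0 and X_- ≡ 0 on [r_e, r_1] for any r_1 > r_e such that the Grönwall bound |d/dr(|X_+|² + |X_-|²)| ≤ g(r)(|X_+|² + |X_-|²) holds on (r_e, r_1] with g integrable. -/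
open Complex Set Filter Topology MeasureTheory

theorem stmt12 (re r1 : ℝ) (hlt : re < r1)
    (Xp Xm : ℝ → ℂ) (α β γ : ℝ → ℝ)
    (hα : ContinuousOn α (Ioi re)) (hβ : ContinuousOn β (Ioi re))
    (hγ : ContinuousOn γ (Ioi re))
    (hXp : ∀ r ∈ Ioi re, HasDerivAt Xp
      (Complex.I * (α r) * Xp r + (Complex.I * (β r) + (γ r)) * Xm r) r)
    (hXm : ∀ r ∈ Ioi re, HasDerivAt Xm
      (-(Complex.I * (α r)) * Xm r - (Complex.I * (β r) - (γ r)) * Xp r) r)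
    (heq : ∀ r ∈ Ioi re, ‖Xp r‖ ^ 2 = ‖Xm r‖ ^ 2)
    (hcontp : ContinuousWithinAt Xp (Ioi re) re)
    (hcontm : ContinuousWithinAt Xm (Ioi re) re)
    (hXpre : Tendsto Xp (nhdsWithin re (Ioi re)) (nhds (Xp re)))
    (hXmre : Tendsto Xm (nhdsWithin re (Ioi re)) (nhds (Xm re)))
    (hzero : Xp re = 0 ∨ Xm re = 0)
    (g D : ℝ → ℝ)
    (hgint : IntegrableOn g (Ioc re r1))
    (hD : ∀ r ∈ Ioc re r1, HasDerivAt (fun s => ‖Xp s‖ ^ 2 + ‖Xm s‖ ^ 2) (D r) r)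
    (hgron : ∀ r ∈ Ioc re r1, |D r| ≤ g r * (‖Xp r‖ ^ 2 + ‖Xm r‖ ^ 2)) :
    ∀ r ∈ Icc re r1, Xp r = 0 ∧ Xm r = 0 := by
  set f : ℝ → ℝ := fun s => ‖Xp s‖ ^ 2 + ‖Xm s‖ ^ 2 with hfdef
  have hf0 : ∀ s, 0 ≤ f s := fun s => by positivity
  -- value at re
  have hnormeq : ‖Xp re‖ ^ 2 = ‖Xm re‖ ^ 2 := by
    have h1 : Tendsto (fun r => ‖Xp r‖ ^ 2) (nhdsWithin re (Ioi re)) (nhds (‖Xp re‖ ^ 2)) :=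
      (hXpre.norm).pow 2
    have h2 : Tendsto (fun r => ‖Xp r‖ ^ 2) (nhdsWithin re (Ioi re)) (nhds (‖Xm re‖ ^ 2)) := by
      have h2' : Tendsto (fun r => ‖Xm r‖ ^ 2) (nhdsWithin re (Ioi re)) (nhds (‖Xm re‖ ^ 2)) :=
        (hXmre.norm).pow 2
      refine h2'.congr' ?_
      filter_upwards [self_mem_nhdsWithin] with r hr
      exact (heq r hr).symm
    exact tendsto_nhds_unique h1 h2
  have hfre : f re = 0 := by
    rcases hzero with h | h
    · have h2 : ‖Xm re‖ ^ 2 = 0 := by rw [← hnormeq, h]; simp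
      have h3 : Xm re = 0 := by
        rw [pow_eq_zero_iff (two_ne_zero), norm_eq_zero] at h2; exact h2
      simp [hfdef, h, h3]
    · have h2 : ‖Xp re‖ ^ 2 = 0 := by rw [hnormeq, h]; simp
      have h3 : Xp re = 0 := by
        rw [pow_eq_zero_iff (two_ne_zero), norm_eq_zero] at h2; exact h2
      simp [hfdef, h, h3]
  -- continuity of f on Icc re r1
  have hcf : ContinuousOn f (Icc re r1) := by
    intro r hr
    rcases eq_or_lt_of_le hr.1 with h | h
    · rw [← h]
      have hW : ContinuousWithinAt f (Ioi re) re := by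
        refine ContinuousWithinAt.add ?_ ?_
        · exact (hXpre.norm.pow 2 : _)
        · exact (hXmre.norm.pow 2 : _)
      have hW' : ContinuousWithinAt f (insert re (Ioi re)) re := hW.insert
      exact hW'.mono (fun s hs => Set.mem_insert_iff.2 (by
        rcases eq_or_lt_of_le hs.1 with h' | h'
        · exact Or.inl h'.symm
        · exact Or.inr h'))
    · exact ((hD r ⟨h, hr.2⟩).continuousAt).continuousWithinAt
  -- bound M on f
  obtain ⟨M, hM⟩ : ∃ M, ∀ r ∈ Icc re r1, f r ≤ M := by
    obtain ⟨M, hM⟩ := isCompact_Icc.exists_bound_of_continuousOn hcf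
    exact ⟨M, fun r hr => (le_abs_self _).trans (by simpa using hM r hr)⟩
  have hMnn : 0 ≤ M := (hf0 re).trans (hM re ⟨le_refl _, hlt.le⟩)
  set h : ℝ → ℝ := fun s => |g s| with hhdef
  have hhint : IntegrableOn h (Ioc re r1) := hgint.abs
  have hhnn : ∀ s, 0 ≤ h s := fun s => abs_nonneg _
  -- Gronwall pointwise bound with h
  have hgron' : ∀ r ∈ Ioc re r1, |D r| ≤ h r * f r := by
    intro r hr
    refine (hgron r hr).trans ?_
    exact mul_le_mul_of_nonneg_right (le_abs_self _) (hf0 r)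
  -- D is integrable on Ioc re r1
  have hDmeas : AEStronglyMeasurable D (volume.restrict (Ioc re r1)) := by
    refine ((measurable_deriv f).aestronglyMeasurable).congr ?_
    refine ((ae_restrict_iff' measurableSet_Ioc).2 (Filter.Eventually.of_forall ?_))
    intro r hr
    exact ((hD r hr).deriv)
  have hDint : IntegrableOn D (Ioc re r1) := by
    refine Integrable.mono' ((hgint.abs).mul_const M) hDmeas ?_
    refine ((ae_restrict_iff' measurableSet_Ioc).2 (Filter.Eventually.of_forall ?_))
    intro r hr
    calc ‖D r‖ = |D r| := rfl
    _ ≤ h r * f r := hgron' r hr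
    _ ≤ |g r| * M := by
        exact mul_le_mul_of_nonneg_left (hM r ⟨hr.1.le, hr.2⟩) (abs_nonneg _)
  -- h * f is integrable on Ioc re r1
  have hfmeas : AEStronglyMeasurable f (volume.restrict (Ioc re r1)) :=
    (hcf.mono Ioc_subset_Icc_self).aestronglyMeasurable measurableSet_Ioc
  have hhfint : IntegrableOn (fun s => h s * f s) (Ioc re r1) := by
    refine Integrable.mono' ((hgint.abs).mul_const M) (hhint.aestronglyMeasurable.mul hfmeas) ?_
    refine ((ae_restrict_iff' measurableSet_Ioc).2 (Filter.Eventually.of_forall ?_))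
    intro r hr
    have : ‖h r * f r‖ = h r * f r := by
      rw [Real.norm_eq_abs, _root_.abs_of_nonneg (mul_nonneg (hhnn r) (hf0 r))]
    rw [this]
    exact mul_le_mul_of_nonneg_left (hM r ⟨hr.1.le, hr.2⟩) (abs_nonneg _)
  -- key integral inequality
  have key : ∀ t ∈ Icc re r1, f t ≤ ∫ s in Ioc re t, h s * f s := by
    intro t ht
    have hftc : ∫ s in re..t, D s = f t - f re := by
      refine intervalIntegral.integral_eq_sub_of_hasDeriv_right_of_le ht.1
        (hcf.mono (Icc_subset_Icc le_rfl ht.2)) ?_ ?_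
      · intro x hx
        exact ((hD x ⟨hx.1, hx.2.le.trans ht.2⟩).hasDerivWithinAt)
      · exact (intervalIntegrable_iff_integrableOn_Ioc_of_le ht.1).2
          (hDint.mono_set (Ioc_subset_Ioc le_rfl ht.2))
    have h1 : f t = ∫ s in Ioc re t, D s := by
      rw [← intervalIntegral.integral_of_le ht.1, hftc, hfre, sub_zero]
    rw [h1]
    refine setIntegral_mono_on
      (hDint.mono_set (Ioc_subset_Ioc le_rfl ht.2))
      (hhfint.mono_set (Ioc_subset_Ioc le_rfl ht.2))
      measurableSet_Ioc ?_
    intro x hx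
    exact (le_abs_self _).trans (hgron' x ⟨hx.1, hx.2.trans ht.2⟩)
  -- primitive Φ of h
  set Φ : ℝ → ℝ := fun t => ∫ s in Ioc re t, h s with hΦdef
  have hΦcont : ContinuousOn Φ (Icc re r1) :=
    intervalIntegral.continuousOn_primitive ((integrableOn_Icc_iff_integrableOn_Ioc).2 hhint)
  -- the zero set
  set S : Set ℝ := {t ∈ Icc re r1 | ∀ s ∈ Icc re t, f s = 0} with hSdef
  have hreS : re ∈ S := by
    refine ⟨⟨le_refl _, hlt.le⟩, ?_⟩
    intro s hs
    have : s = re := le_antisymm hs.2 hs.1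
    rw [this, hfre]
  have hSbdd : BddAbove S := ⟨r1, fun t ht => ht.1.2⟩
  have hSne : S.Nonempty := ⟨re, hreS⟩
  set c : ℝ := sSup S with hcdef
  have hcmem : c ∈ Icc re r1 := ⟨le_csSup hSbdd hreS, csSup_le hSne fun t ht => ht.1.2⟩
  have hbelow : ∀ x, re ≤ x → x < c → f x = 0 := by
    intro x hx1 hx2
    obtain ⟨t, htS, hxt⟩ := exists_lt_of_lt_csSup hSne hx2
    exact htS.2 x ⟨hx1, hxt.le⟩
  have hfc : f c = 0 := by
    have hint0 : ∫ x in Ioc re c, h x * f x = 0 := by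
      have hae : ∀ᵐ x ∂(volume.restrict (Ioc re c)), h x * f x = 0 := by
        refine (ae_restrict_iff' measurableSet_Ioc).2 ?_
        have hs0 : (volume : Measure ℝ) {c} = 0 := measure_singleton c
        filter_upwards [measure_eq_zero_iff_ae_notMem.mp hs0] with x hx hx'
        have : f x = 0 := hbelow x hx'.1.le (lt_of_le_of_ne hx'.2 hx)
        rw [this, mul_zero]
      exact integral_eq_zero_of_ae hae
    have hk := key c hcmem
    rw [hint0] at hk
    exact le_antisymm hk (hf0 c)
  have hcS : c ∈ S := by
    refine ⟨hcmem, ?_⟩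
    intro s hs
    rcases eq_or_lt_of_le hs.2 with h | h
    · rw [h]; exact hfc
    · exact hbelow s hs.1 h
  -- show c = r1
  have hc1 : c = r1 := by
    by_contra hne
    have hc : c < r1 := lt_of_le_of_ne hcmem.2 hne
    -- find b ∈ Ioc c r1 with Φ b - Φ c < 1/2
    have hNB : (nhdsWithin c (Ioc c r1)).NeBot := by
      refine mem_closure_iff_nhdsWithin_neBot.mp ?_
      rw [closure_Ioc (ne_of_lt hc)]
      exact ⟨le_refl c, hc.le⟩
    have hΦc : Tendsto Φ (nhdsWithin c (Ioc c r1)) (nhds (Φ c)) := by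
      refine (hΦcont c hcmem).mono_left ?_
      exact nhdsWithin_mono c (fun x hx => ⟨hcmem.1.trans hx.1.le, hx.2⟩)
    have hev : ∀ᶠ b in nhdsWithin c (Ioc c r1), Φ b < Φ c + 1/2 :=
      hΦc.eventually (eventually_lt_nhds (by linarith))
    haveI := hNB
    obtain ⟨b, hΦb, hb⟩ := (hev.and self_mem_nhdsWithin).exists
    -- now show f = 0 on Icc c b
    have hbIcc : Icc c b ⊆ Icc re r1 := Icc_subset_Icc hcmem.1 hb.2
    obtain ⟨rs, hrs, hmax⟩ := isCompact_Icc.exists_isMaxOn (nonempty_Icc.2 hb.1.le)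
      (hcf.mono hbIcc)
    have hMpnn : 0 ≤ f rs := hf0 rs
    -- split the integral
    have hsplit : ∫ s in Ioc re rs, h s * f s =
        (∫ s in Ioc re c, h s * f s) + ∫ s in Ioc c rs, h s * f s := by
      rw [← setIntegral_union (Ioc_disjoint_Ioc_of_le le_rfl) measurableSet_Ioc
        (hhfint.mono_set (Ioc_subset_Ioc le_rfl hcmem.2))
        (hhfint.mono_set (Ioc_subset_Ioc hcmem.1 ((hbIcc hrs).2))),
        Ioc_union_Ioc_eq_Ioc hcmem.1 hrs.1]
    have hzero1 : ∫ s in Ioc re c, h s * f s = 0 := by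
      refine setIntegral_eq_zero_of_forall_eq_zero ?_
      intro x hx
      rw [hcS.2 x ⟨hx.1.le, hx.2⟩, mul_zero]
    have hΦsplit : Φ rs = Φ c + ∫ s in Ioc c rs, h s := by
      rw [hΦdef]
      simp only
      rw [← setIntegral_union (Ioc_disjoint_Ioc_of_le le_rfl) measurableSet_Ioc
        (hhint.mono_set (Ioc_subset_Ioc le_rfl hcmem.2))
        (hhint.mono_set (Ioc_subset_Ioc hcmem.1 ((hbIcc hrs).2))),
        Ioc_union_Ioc_eq_Ioc hcmem.1 hrs.1]
    have hΦmono : Φ rs ≤ Φ b := by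
      rw [hΦdef]
      refine setIntegral_mono_set (hhint.mono_set (Ioc_subset_Ioc le_rfl hb.2))
        ((ae_restrict_iff' measurableSet_Ioc).2 (Filter.Eventually.of_forall
          (fun x _ => hhnn x)))
        (HasSubset.Subset.eventuallyLE (Ioc_subset_Ioc le_rfl hrs.2))
    have hest : (f rs) ≤ (1/2) * (f rs) := by
      have h1 : f rs ≤ ∫ s in Ioc c rs, h s * f s := by
        have := key rs (hbIcc hrs)
        rw [hsplit, hzero1, zero_add] at this
        exact this
      have h2 : ∫ s in Ioc c rs, h s * f s ≤ ∫ s in Ioc c rs, h s * (f rs) := by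
        refine setIntegral_mono_on
          (hhfint.mono_set (Ioc_subset_Ioc hcmem.1 ((hbIcc hrs).2)))
          (((hhint.mono_set (Ioc_subset_Ioc hcmem.1 ((hbIcc hrs).2))).mul_const (f rs)))
          measurableSet_Ioc ?_
        intro x hx
        refine mul_le_mul_of_nonneg_left ?_ (hhnn x)
        exact hmax ⟨hx.1.le, hx.2.trans hrs.2⟩
      have h3 : ∫ s in Ioc c rs, h s * (f rs) = (∫ s in Ioc c rs, h s) * (f rs) :=
        integral_mul_const _ _
      have h4 : (∫ s in Ioc c rs, h s) ≤ 1/2 := by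
        have : Φ c + (∫ s in Ioc c rs, h s) ≤ Φ c + 1/2 := by
          rw [← hΦsplit]
          exact hΦmono.trans hΦb.le
        linarith
      calc (f rs) = f rs := rfl
      _ ≤ ∫ s in Ioc c rs, h s * f s := h1
      _ ≤ (∫ s in Ioc c rs, h s) * (f rs) := by rw [← h3]; exact h2
      _ ≤ (1/2) * (f rs) := mul_le_mul_of_nonneg_right h4 hMpnn
    have hMp0 : (f rs) = 0 := by
      obtain ⟨a, ha⟩ : ∃ a, f rs = a := ⟨_, rfl⟩
      rw [ha] at hest hMpnn ⊢
      linarith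
    have hbS : b ∈ S := by
      refine ⟨⟨hcmem.1.trans hb.1.le, hb.2⟩, ?_⟩
      intro s hs
      rcases le_or_gt s c with h' | h'
      · exact hcS.2 s ⟨hs.1, h'⟩
      · have : f s ≤ (f rs) := hmax ⟨h'.le, hs.2⟩
        rw [hMp0] at this
        exact le_antisymm this (hf0 s)
    have : b ≤ c := le_csSup hSbdd hbS
    exact absurd this (not_le.2 hb.1)
  -- conclude
  intro r hr
  have hfr : f r = 0 := by
    rw [← hc1] at hr
    exact hcS.2 r hr
  have hp : ‖Xp r‖ ^ 2 = 0 := by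
    have h1 : (0:ℝ) ≤ ‖Xp r‖ ^ 2 := by positivity
    have h2 : (0:ℝ) ≤ ‖Xm r‖ ^ 2 := by positivity
    have : ‖Xp r‖ ^ 2 + ‖Xm r‖ ^ 2 = 0 := hfr
    linarith
  have hm : ‖Xm r‖ ^ 2 = 0 := by
    have h1 : (0:ℝ) ≤ ‖Xp r‖ ^ 2 := by positivity
    have : ‖Xp r‖ ^ 2 + ‖Xm r‖ ^ 2 = 0 := hfr
    linarith
  constructor
  · simpa using (pow_eq_zero_iff (by norm_num : 2 ≠ 0)).1 (by simpa using hp)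
  · simpa using (pow_eq_zero_iff (by norm_num : 2 ≠ 0)).1 (by simpa using hm)
end
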